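/- For every x ∈ ℝⁿ, the limit as ε → 0⁺ of Σᵢ₌₁ⁿ log(1 + |xᵢ|/ε) / log(1 + 1/ε) exists and equals ‖x‖₀, the number of nonzero entries of x. -/

import Mathlib

open Filter Real

private lemma aux_div_neg_log (a : ℝ) (ha : 0 < a) :
    Filter.Tendsto (fun ε : ℝ => Real.log (ε + a) / (-Real.log ε))
      (nhdsWithin 0 (Set.Ioi 0)) (nhds 0) := by
  have h1 : Filter.Tendsto (fun ε : ℝ => Real.log (ε + a)) (nhdsWithin 0 (Set.Ioi 0))
      (nhds (Real.log a)) := by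
    have : Filter.Tendsto (fun ε : ℝ => ε + a) (nhdsWithin 0 (Set.Ioi 0)) (nhds a) := by
      have h0 : Filter.Tendsto (fun ε : ℝ => ε + a) (nhds 0) (nhds a) := by
        have := (continuous_add_right a).tendsto (0 : ℝ)
        simpa using this
      exact h0.mono_left nhdsWithin_le_nhds
    exact (Real.continuousAt_log ha.ne').tendsto.comp this
  have h2 : Filter.Tendsto (fun ε : ℝ => -Real.log ε) (nhdsWithin 0 (Set.Ioi 0)) atTop :=
    tendsto_neg_atBot_atTop.comp Real.tendsto_log_nhdsGT_zero
  exact h1.div_atTop h2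

private lemma aux_ratio (a : ℝ) (ha : 0 < a) :
    Filter.Tendsto (fun ε : ℝ => Real.log (1 + a / ε) / Real.log (1 + 1 / ε))
      (nhdsWithin 0 (Set.Ioi 0)) (nhds 1) := by
  have hu := aux_div_neg_log a ha
  have hv := aux_div_neg_log 1 one_pos
  have hT : Filter.Tendsto
      (fun ε : ℝ => (Real.log (ε + a) / (-Real.log ε) + 1) /
        (Real.log (ε + 1) / (-Real.log ε) + 1))
      (nhdsWithin 0 (Set.Ioi 0)) (nhds 1) := by
    have hd : ((0:ℝ) + 1) ≠ 0 := by norm_num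
    have := (hu.add (tendsto_const_nhds (x := (1:ℝ)))).div
      (hv.add (tendsto_const_nhds (x := (1:ℝ)))) hd
    simp at this
    exact this
  refine hT.congr' ?_
  filter_upwards [Ioo_mem_nhdsGT_of_mem ⟨le_refl 0, one_pos⟩] with ε hε
  obtain ⟨hε0, hε1⟩ := hε
  have hlog : Real.log ε < 0 := Real.log_neg hε0 hε1
  have hlogne : -Real.log ε ≠ 0 := by linarith
  have e1 : (1 : ℝ) + a / ε = (ε + a) / ε := by field_simp
  have e2 : (1 : ℝ) + 1 / ε = (ε + 1) / ε := by field_simp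
  rw [e1, e2, Real.log_div (by linarith) hε0.ne', Real.log_div (by linarith) hε0.ne']
  have key : ∀ p q : ℝ, (p / (-Real.log ε) + 1) / (q / (-Real.log ε) + 1)
      = (p - Real.log ε) / (q - Real.log ε) := by
    intro p q
    have h1 : p / (-Real.log ε) + 1 = (p - Real.log ε) / (-Real.log ε) := by
      rw [eq_div_iff hlogne, add_mul, div_mul_cancel₀ _ hlogne, one_mul]; ring
    have h2 : q / (-Real.log ε) + 1 = (q - Real.log ε) / (-Real.log ε) := by
      rw [eq_div_iff hlogne, add_mul, div_mul_cancel₀ _ hlogne, one_mul]; ring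
    rw [h1, h2, div_div_div_cancel_right₀ hlogne]
  exact key _ _

/-- As ε → 0⁺, Σᵢ log(1 + |xᵢ|/ε)/log(1 + 1/ε) tends to ‖x‖₀, the number of nonzero entries. -/
theorem stmt_4 (n : ℕ) (x : Fin n → ℝ) :
    Filter.Tendsto
      (fun ε : ℝ => ∑ i, Real.log (1 + |x i| / ε) / Real.log (1 + 1 / ε))
      (nhdsWithin 0 (Set.Ioi 0))
      (nhds ((Finset.univ.filter (fun i => x i ≠ 0)).card : ℝ)) := by
  have hcard : ((Finset.univ.filter (fun i => x i ≠ 0)).card : ℝ)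
      = ∑ i : Fin n, if x i ≠ 0 then (1 : ℝ) else 0 := by
    rw [Finset.card_filter]
    push_cast
    rfl
  rw [hcard]
  apply tendsto_finset_sum
  intro i _
  by_cases h : x i = 0
  · simp [h]
  · simp only [h, if_pos, ne_eq, not_false_iff]
    simpa using aux_ratio |x i| (abs_pos.mpr h)
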